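/- Let B : [0,1] → ℝ be continuous with B(0) = 0. If u is a B-solution with u(0) = 0 and u'(0) = 0, then u(x) = 0 for all x ∈ [0,1]. -/

import Mathlib

open MeasureTheory intervalIntegral

/-- `u` is a pathwise (`B`-)solution of the homogeneous equation `-u'' + B'·u = 0`:
`u` is continuously differentiable on `[0,1]` with derivative `u'`, and
`u'(x) = u'(0) + u(x)·B(x) - ∫_0^x u'(y)·B(y) dy` for all `x ∈ [0,1]`. -/
def IsBSolution (B u u' : ℝ → ℝ) : Prop :=
  (∀ x ∈ Set.Icc (0:ℝ) 1, HasDerivWithinAt u (u' x) (Set.Icc 0 1) x) ∧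
  ContinuousOn u' (Set.Icc 0 1) ∧
  ∀ x ∈ Set.Icc (0:ℝ) 1, u' x = u' 0 + u x * B x - ∫ y in (0:ℝ)..x, u' y * B y

/-- A B-solution with u(0) = 0 and u'(0) = 0 vanishes identically on [0,1]. -/
theorem bsolution_zero (B u u' : ℝ → ℝ)
    (hB : ContinuousOn B (Set.Icc 0 1)) (hB0 : B 0 = 0)
    (hu : IsBSolution B u u') (hu0 : u 0 = 0) (hu'0 : u' 0 = 0) :
    ∀ x ∈ Set.Icc (0:ℝ) 1, u x = 0 := by
  obtain ⟨hderiv, hcont', heq⟩ := hu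
  -- projection onto [0,1]
  set p : ℝ → ℝ := fun y => max 0 (min y 1) with hp
  have hpmem : ∀ y, p y ∈ Set.Icc (0:ℝ) 1 := fun y =>
    ⟨le_max_left _ _, max_le (by norm_num) (min_le_right _ _)⟩
  have hpeq : ∀ y ∈ Set.Icc (0:ℝ) 1, p y = y := fun y hy => by
    simp [hp, min_eq_left hy.2, max_eq_right hy.1]
  have hpcont : Continuous p := continuous_const.max (continuous_id.min continuous_const)
  -- continuous extensions of u' and B
  set g : ℝ → ℝ := fun y => u' (p y) with hg
  set Bc : ℝ → ℝ := fun y => B (p y) with hBc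
  have hgcont : Continuous g := hcont'.comp_continuous hpcont hpmem
  have hBccont : Continuous Bc := hB.comp_continuous hpcont hpmem
  have hgeq : ∀ y ∈ Set.Icc (0:ℝ) 1, g y = u' y := fun y hy => by rw [hg]; simp [hpeq y hy]
  have hBceq : ∀ y ∈ Set.Icc (0:ℝ) 1, Bc y = B y := fun y hy => by rw [hBc]; simp [hpeq y hy]
  -- bound on B
  obtain ⟨M, hM⟩ := isCompact_Icc.exists_bound_of_continuousOn hB
  have hM0 : 0 ≤ M := le_trans (norm_nonneg _) (hM 0 ⟨le_refl 0, zero_le_one⟩)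
  have hBcM : ∀ y, ‖Bc y‖ ≤ M := fun y => hM _ (hpmem y)
  -- u as integral of g
  have hucont : ContinuousOn u (Set.Icc 0 1) := fun x hx => (hderiv x hx).continuousWithinAt
  have hu_eq : ∀ x ∈ Set.Icc (0:ℝ) 1, u x = ∫ y in (0:ℝ)..x, g y := by
    intro x hx
    have h1 : (∫ y in (0:ℝ)..x, g y) = u x - u 0 := by
      apply integral_eq_sub_of_hasDeriv_right_of_le hx.1
        (hucont.mono (Set.Icc_subset_Icc le_rfl hx.2))
      · intro t ht
        have ht' : t ∈ Set.Icc (0:ℝ) 1 := ⟨le_of_lt ht.1, le_trans (le_of_lt ht.2) hx.2⟩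
        have : HasDerivAt u (u' t) t := by
          apply (hderiv t ht').hasDerivAt
          exact Icc_mem_nhds ht.1 (lt_of_lt_of_le ht.2 hx.2)
        rw [hgeq t ht']
        exact this.hasDerivWithinAt
      · exact (hgcont.intervalIntegrable 0 x)
    rw [h1, hu0, sub_zero]
  -- v = ∫ ‖g‖
  set w : ℝ → ℝ := fun y => ‖g y‖ with hw
  have hwcont : Continuous w := hgcont.norm
  set v : ℝ → ℝ := fun x => ∫ y in (0:ℝ)..x, w y with hv
  have hvderiv : ∀ t : ℝ, HasDerivAt v (w t) t := fun t =>
    integral_hasDerivAt_right (hwcont.intervalIntegrable 0 t)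
      (hwcont.stronglyMeasurableAtFilter _ _) hwcont.continuousAt
  have hvnonneg : ∀ x ∈ Set.Icc (0:ℝ) 1, 0 ≤ v x := fun x hx =>
    intervalIntegral.integral_nonneg hx.1 (fun y _ => norm_nonneg _)
  -- |u x| ≤ v x
  have huv : ∀ x ∈ Set.Icc (0:ℝ) 1, ‖u x‖ ≤ v x := by
    intro x hx
    rw [hu_eq x hx]
    exact intervalIntegral.norm_integral_le_integral_norm hx.1
  -- key bound : ‖u' x‖ ≤ 2M v x on [0,1]
  have hkey : ∀ x ∈ Set.Icc (0:ℝ) 1, ‖u' x‖ ≤ 2 * M * v x := by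
    intro x hx
    have hx01 : (0:ℝ) ≤ x := hx.1
    have heqx := heq x hx
    rw [hu'0, zero_add] at heqx
    have hIcc : Set.uIcc (0:ℝ) x ⊆ Set.Icc 0 1 := by
      rw [Set.uIcc_of_le hx01]
      exact Set.Icc_subset_Icc le_rfl hx.2
    have hcongr : (∫ y in (0:ℝ)..x, u' y * B y) = ∫ y in (0:ℝ)..x, g y * Bc y := by
      apply intervalIntegral.integral_congr
      intro y hy
      dsimp only
      rw [hgeq y (hIcc hy), hBceq y (hIcc hy)]
    have h2 : ‖∫ y in (0:ℝ)..x, g y * Bc y‖ ≤ M * v x := by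
      calc ‖∫ y in (0:ℝ)..x, g y * Bc y‖ ≤ ∫ y in (0:ℝ)..x, ‖g y * Bc y‖ :=
            intervalIntegral.norm_integral_le_integral_norm hx01
        _ ≤ ∫ y in (0:ℝ)..x, M * w y := by
            apply intervalIntegral.integral_mono_on hx01
              ((hgcont.mul hBccont).norm.intervalIntegrable 0 x)
              ((continuous_const.mul hwcont).intervalIntegrable 0 x)
            intro y _
            simp only [Pi.mul_apply]
            rw [norm_mul, mul_comm]
            exact mul_le_mul_of_nonneg_right (hBcM y) (norm_nonneg _)
        _ = M * v x := intervalIntegral.integral_const_mul _ _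
    have h3 : ‖u x * B x‖ ≤ M * v x := by
      rw [norm_mul]
      calc ‖u x‖ * ‖B x‖ ≤ v x * M :=
            mul_le_mul (huv x hx) (hM x hx) (norm_nonneg _) (hvnonneg x hx)
        _ = M * v x := mul_comm _ _
    calc ‖u' x‖ = ‖u x * B x - ∫ y in (0:ℝ)..x, u' y * B y‖ := by rw [heqx]
      _ ≤ ‖u x * B x‖ + ‖∫ y in (0:ℝ)..x, u' y * B y‖ := norm_sub_le _ _
      _ ≤ M * v x + M * v x := by
          apply add_le_add h3
          rw [hcongr]; exact h2
      _ = 2 * M * v x := by ring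
  -- Grönwall
  have hvzero : ∀ x ∈ Set.Icc (0:ℝ) 1, v x = 0 := by
    have hgron : ∀ x ∈ Set.Icc (0:ℝ) 1, ‖v x‖ ≤ gronwallBound 0 (2 * M) 0 (x - 0) := by
      apply norm_le_gronwallBound_of_norm_deriv_right_le
        (fun x _ => (hvderiv x).continuousAt.continuousWithinAt)
        (fun x _ => (hvderiv x).hasDerivWithinAt)
      · simp [hv]
      · intro x hx
        have hx' : x ∈ Set.Icc (0:ℝ) 1 := ⟨hx.1, le_of_lt hx.2⟩
        have h1 := hkey x hx'
        have hwx : w x = |u' x| := by rw [hw]; simp [Real.norm_eq_abs, hgeq x hx']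
        simp only [Real.norm_eq_abs, add_zero] at h1 ⊢
        rw [hwx, abs_abs, abs_of_nonneg (hvnonneg x hx')]
        exact h1
    intro x hx
    have := hgron x hx
    rw [gronwallBound_ε0, zero_mul] at this
    have h0 := hvnonneg x hx
    rw [Real.norm_eq_abs, abs_of_nonneg h0] at this
    linarith
  intro x hx
  have h := huv x hx
  rw [hvzero x hx, Real.norm_eq_abs] at h
  exact abs_eq_zero.mp (le_antisymm h (abs_nonneg _))
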